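/- Let (m,n) be a coprime pair of positive integers and let R be a set of m+n integers with 0 ∈ R. Then R is the rank set of some (m,n)-path if and only if for every ℓ ∈ R, exactly one of ℓ−m and ℓ+n belongs to R (and this in turn is equivalent to: for every ℓ ∈ R, at least one of ℓ−m and ℓ+n belongs to R). -/

import Mathlib

/-- The list of ranks of the lattice points visited by a path (excluding the final
point), starting from rank `r`.  A `true` entry is a north (`u`) step, which adds `m`
to the rank; a `false` entry is an east (`d`) step, which subtracts `n`. -/
def rankWalk (m n : ℤ) : List Bool → ℤ → List ℤ
  | [], _ => []
  | b :: bs, r => r :: rankWalk m n bs (r + if b then m else -n)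

/-- An `(m,n)`-path: a word of `n` north steps (`true`) and `m` east steps (`false`). -/
def IsPathWord (m n : ℕ) (P : List Bool) : Prop :=
  P.length = m + n ∧ P.count true = n

/-- An `(m,n)`-Dyck path: an `(m,n)`-path all of whose ranks are nonnegative. -/
def IsDyckWord (m n : ℕ) (P : List Bool) : Prop :=
  IsPathWord m n P ∧ ∀ r ∈ rankWalk (m : ℤ) (n : ℤ) P 0, 0 ≤ r

/-- The rank set of a path: the ranks of its `m+n` lattice points other than the endpoint. -/
def rankSet (m n : ℕ) (P : List Bool) : Finset ℤ :=
  (rankWalk (m : ℤ) (n : ℤ) P 0).toFinset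

/-- `R` is the rank set of some `(m,n)`-path. -/
def IsRankSet (m n : ℕ) (R : Finset ℤ) : Prop :=
  ∃ P : List Bool, IsPathWord m n P ∧ rankSet m n P = R

/-- `R` is the rank set of some `(m,n)`-Dyck path. -/
def IsDyckRankSet (m n : ℕ) (R : Finset ℤ) : Prop :=
  ∃ P : List Bool, IsDyckWord m n P ∧ rankSet m n P = R

namespace RankAux

/-- The list of step increments. -/
def delta (m n : ℤ) (b : Bool) : ℤ := if b then m else -n

lemma mem_pred (m n : ℤ) (P : List Bool) (r ℓ : ℤ)
    (h : ℓ ∈ rankWalk m n P r) :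
    ℓ = r ∨ ℓ - m ∈ rankWalk m n P r ∨ ℓ + n ∈ rankWalk m n P r := by
  induction P generalizing r with
  | nil => simp [rankWalk] at h
  | cons b bs ih =>
    simp only [rankWalk, List.mem_cons] at h ⊢
    rcases h with h | h
    · exact Or.inl h
    · rcases ih _ h with h1 | h1 | h1
      · cases b with
        | true =>
          refine Or.inr (Or.inl (Or.inl ?_))
          simp at h1; omega
        | false =>
          refine Or.inr (Or.inr (Or.inl ?_))
          simp at h1; omega
      · exact Or.inr (Or.inl (Or.inr h1))
      · exact Or.inr (Or.inr (Or.inr h1))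

lemma last_pred (m n : ℤ) : ∀ (P : List Bool) (r : ℤ), P ≠ [] →
    (r + (P.map (delta m n)).sum) - m ∈ rankWalk m n P r ∨
    (r + (P.map (delta m n)).sum) + n ∈ rankWalk m n P r := by
  intro P
  induction P with
  | nil => intro r h; exact absurd rfl h
  | cons b bs ih =>
    intro r _
    rcases eq_or_ne bs [] with hbs | hbs
    · subst hbs
      cases b with
      | true => left; simp [rankWalk, delta]
      | false => right; simp [rankWalk, delta]
    · have := ih (r + if b then m else -n) hbs
      have harr : r + ((b :: bs).map (delta m n)).sum
          = (r + if b then m else -n) + (bs.map (delta m n)).sum := by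
        simp [delta]; ring
      rw [harr]
      rcases this with h | h
      · exact Or.inl (by simp [rankWalk, List.mem_cons]; right; exact h)
      · exact Or.inr (by simp [rankWalk, List.mem_cons]; right; exact h)

lemma sum_delta (m n : ℤ) (P : List Bool) :
    (P.map (delta m n)).sum = (P.count true : ℤ) * m - (P.count false : ℤ) * n := by
  induction P with
  | nil => simp
  | cons b bs ih =>
    cases b <;> simp [delta, List.count_cons, ih] <;> ring

lemma count_tf (P : List Bool) : P.count true + P.count false = P.length := by
  induction P with
  | nil => simp
  | cons b bs ih => cases b <;> simp [List.count_cons] <;> omega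

lemma rankWalk_map (m n : ℤ) (k : ℕ) : ∀ (g : ℕ → ℤ) (b : ℕ → Bool),
    (∀ i, g (i+1) = g i + if b i then m else -n) →
    rankWalk m n ((List.range k).map b) (g 0) = (List.range k).map g := by
  induction k with
  | zero => intro g b _; simp [rankWalk]
  | succ k ih =>
    intro g b h
    rw [List.range_succ_eq_map]
    simp only [List.map_cons, List.map_map, rankWalk]
    have h0 : g 0 + (if b 0 then m else -n) = (g ∘ Nat.succ) 0 := (h 0).symm
    rw [h0, ih (g ∘ Nat.succ) (b ∘ Nat.succ) (fun i => h (i+1))]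

lemma tel (m n : ℤ) (g : ℕ → ℤ) (b : ℕ → Bool)
    (h : ∀ i, g (i+1) = g i + if b i then m else -n) (k : ℕ) :
    g k = g 0 + (((List.range k).map b).map (delta m n)).sum := by
  induction k with
  | zero => simp
  | succ k ih =>
    rw [List.range_succ]
    simp only [List.map_append, List.sum_append, List.map_cons, List.map_nil,
      List.sum_cons, List.sum_nil]
    rw [h k, ih]
    simp [delta]; ring

/-- The canonical rank sequence extracted from a candidate rank set. -/
def seqR (m n : ℕ) (R : Finset ℤ) : ℕ → ℤ
  | 0 => 0
  | i+1 => if seqR m n R i + (m : ℤ) ∈ R then seqR m n R i + (m : ℤ)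
           else seqR m n R i - (n : ℤ)

theorem main_of_al (m n : ℕ) (hm : 0 < m) (hn : 0 < n) (hcop : Nat.Coprime m n)
    (R : Finset ℤ) (hcard : R.card = m + n) (h0 : (0 : ℤ) ∈ R)
    (hal : ∀ ℓ ∈ R, ℓ - (m : ℤ) ∈ R ∨ ℓ + (n : ℤ) ∈ R) :
    IsRankSet m n R ∧ ∀ ℓ ∈ R, Xor' (ℓ - (m : ℤ) ∈ R) (ℓ + (n : ℤ) ∈ R) := by
  haveI : NeZero (m + n) := ⟨by omega⟩
  set N := m + n with hN
  -- the key cast fact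
  have hmn0 : ((m : ℤ) : ZMod N) + ((n : ℤ) : ZMod N) = 0 := by
    push_cast
    rw [← Nat.cast_add, hN, ZMod.natCast_self]
  -- surjectivity of reduction mod N on R
  have hstep : ∀ k : ℕ, ∃ ℓ ∈ R, ((ℓ : ZMod N)) = (k : ZMod N) * ((n : ℤ) : ZMod N) := by
    intro k
    induction k with
    | zero => exact ⟨0, h0, by simp⟩
    | succ k ih =>
      obtain ⟨ℓ, hl, hc⟩ := ih
      rcases hal ℓ hl with h | h
      · refine ⟨ℓ - m, h, ?_⟩
        push_cast
        push_cast at hc hmn0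
        rw [hc]
        have : ((m : ℕ) : ZMod N) = -((n : ℕ) : ZMod N) := by linear_combination hmn0
        rw [this]; ring
      · refine ⟨ℓ + n, h, ?_⟩
        push_cast
        push_cast at hc
        rw [hc]; ring
  have hsur : ∀ c : ZMod N, ∃ ℓ ∈ R, ((ℓ : ZMod N)) = c := by
    intro c
    have hu : IsUnit ((n : ℤ) : ZMod N) := by
      have : Nat.Coprime n N := by rw [hN]; simpa using hcop.symm
      push_cast
      exact (ZMod.isUnit_iff_coprime n N).mpr this
    obtain ⟨u, hu⟩ := hu
    obtain ⟨ℓ, hl, hc⟩ := hstep (c * (↑u⁻¹ : ZMod N)).val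
    refine ⟨ℓ, hl, ?_⟩
    rw [hc, ZMod.natCast_val, ZMod.cast_id, ← hu]
    simp
  -- injectivity
  have hinj : ∀ a ∈ R, ∀ b ∈ R, ((a : ZMod N)) = ((b : ZMod N)) → a = b := by
    have himg : R.image (fun ℓ : ℤ => (ℓ : ZMod N)) = Finset.univ := by
      apply Finset.eq_univ_of_forall
      intro c
      obtain ⟨ℓ, hl, hc⟩ := hsur c
      exact Finset.mem_image.mpr ⟨ℓ, hl, hc⟩
    have hcardimg : (R.image (fun ℓ : ℤ => (ℓ : ZMod N))).card = R.card := by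
      rw [himg, Finset.card_univ, ZMod.card, hcard]
    have := Finset.injOn_of_card_image_eq hcardimg
    intro a ha b hb hab
    exact this ha hb hab
  -- exactly one
  have hxor : ∀ ℓ ∈ R, Xor' (ℓ - (m : ℤ) ∈ R) (ℓ + (n : ℤ) ∈ R) := by
    intro ℓ hl
    have hne : ℓ - (m : ℤ) ≠ ℓ + (n : ℤ) := by omega
    have hcast : (((ℓ - (m : ℤ)) : ℤ) : ZMod N) = (((ℓ + (n : ℤ)) : ℤ) : ZMod N) := by
      push_cast
      push_cast at hmn0
      linear_combination -hmn0
    rcases hal ℓ hl with h | h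
    · refine Or.inl ⟨h, fun h2 => hne (hinj _ h _ h2 hcast)⟩
    · refine Or.inr ⟨h, fun h2 => hne (hinj _ h2 _ h hcast)⟩
  -- the sequence
  set f : ℕ → ℤ := seqR m n R with hf
  have hf0 : f 0 = 0 := rfl
  have hfsucc : ∀ i, f (i+1) = if f i + (m : ℤ) ∈ R then f i + (m : ℤ) else f i - (n : ℤ) :=
    fun i => rfl
  have hcast_succ : ∀ r : ℤ, (((r + (m:ℤ)) : ℤ) : ZMod N) = (r : ZMod N) + ((m:ℤ) : ZMod N) := by
    intro r; push_cast; ring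
  have hseq : ∀ i : ℕ, f i ∈ R ∧ ((f i : ZMod N)) = (i : ZMod N) * ((m : ℤ) : ZMod N) := by
    intro i
    induction i with
    | zero => exact ⟨by rw [hf0]; exact h0, by rw [hf0]; simp⟩
    | succ i ih =>
      obtain ⟨hmem, hcl⟩ := ih
      have hclsucc : ∀ hmem2 : f (i+1) ∈ R,
          ((f (i+1) : ZMod N)) = ((i+1 : ℕ) : ZMod N) * ((m : ℤ) : ZMod N) := by
        intro _
        rw [hfsucc i]
        split
        · push_cast
          push_cast at hcl
          rw [hcl]; ring
        · push_cast
          push_cast at hcl hmn0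
          rw [hcl]
          linear_combination -hmn0
      have hmem2 : f (i+1) ∈ R := by
        by_cases hc : f i + (m : ℤ) ∈ R
        · rw [hfsucc i, if_pos hc]; exact hc
        · -- find the successor via hal
          obtain ⟨ℓ, hlR, hlc⟩ := hsur ((f i : ZMod N) + ((m : ℤ) : ZMod N))
          rcases hal ℓ hlR with h | h
          · exfalso
            have : ℓ - (m : ℤ) = f i := by
              apply hinj _ h _ hmem
              push_cast
              push_cast at hlc
              rw [hlc]; ring
            have hℓ : ℓ = f i + (m : ℤ) := by omega
            exact hc (hℓ ▸ hlR)
          · have : ℓ + (n : ℤ) = f i := by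
              apply hinj _ h _ hmem
              push_cast
              push_cast at hlc hmn0
              rw [hlc]
              linear_combination hmn0
            rw [hfsucc i, if_neg hc]
            have hln : ℓ = f i - (n : ℤ) := by omega
            rw [← hln]; exact hlR
      exact ⟨hmem2, hclsucc hmem2⟩
  -- m is a unit mod N
  have hum : IsUnit ((m : ℤ) : ZMod N) := by
    have : Nat.Coprime m N := by rw [hN]; simpa using hcop
    push_cast
    exact (ZMod.isUnit_iff_coprime m N).mpr this
  have hfinj : ∀ i < N, ∀ j < N, f i = f j → i = j := by
    intro i hi j hj hij
    have h1 : (i : ZMod N) * ((m : ℤ) : ZMod N) = (j : ZMod N) * ((m : ℤ) : ZMod N) := by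
      rw [← (hseq i).2, ← (hseq j).2, hij]
    have h2 : (i : ZMod N) = (j : ZMod N) := hum.mul_right_cancel h1
    have := congrArg ZMod.val h2
    rwa [ZMod.val_cast_of_lt hi, ZMod.val_cast_of_lt hj] at this
  -- closing: f N = 0
  have hfN : f N = 0 := by
    apply hinj _ (hseq N).1 _ h0
    rw [(hseq N).2]
    simp [ZMod.natCast_self]
  -- the path word
  set b : ℕ → Bool := fun i => decide (f i + (m : ℤ) ∈ R) with hb
  have hrec : ∀ i, f (i+1) = f i + if b i then (m : ℤ) else -(n : ℤ) := by
    intro i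
    rw [hfsucc i]
    by_cases hc : f i + (m : ℤ) ∈ R
    · rw [if_pos hc, if_pos (by simpa [hb] using hc)]
    · rw [if_neg hc, if_neg (by simpa [hb] using hc)]; ring
  set P : List Bool := (List.range N).map b with hP
  have hwalk : rankWalk (m : ℤ) (n : ℤ) P 0 = (List.range N).map f := by
    rw [hP, ← hf0]
    exact rankWalk_map (m : ℤ) (n : ℤ) N f b hrec
  -- the rank set is R
  have hset : rankSet m n P = R := by
    have hsub : ((List.range N).map f).toFinset ⊆ R := by
      intro x hx
      rw [List.mem_toFinset, List.mem_map] at hx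
      obtain ⟨i, _, rfl⟩ := hx
      exact (hseq i).1
    have hnd : ((List.range N).map f).Nodup := by
      apply List.Nodup.map_on _ List.nodup_range
      intro x hx y hy hxy
      exact hfinj x (List.mem_range.mp hx) y (List.mem_range.mp hy) hxy
    have hcard2 : ((List.range N).map f).toFinset.card = N := by
      rw [List.toFinset_card_of_nodup hnd, List.length_map, List.length_range]
    rw [rankSet, hwalk]
    apply Finset.eq_of_subset_of_card_le hsub
    rw [hcard2, hcard]
  -- counting
  have hlenP : P.length = m + n := by rw [hP, List.length_map, List.length_range]
  have hctP : P.count true = n := by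
    have hsum : (P.map (delta (m:ℤ) (n:ℤ))).sum = 0 := by
      have := tel (m:ℤ) (n:ℤ) f b hrec N
      rw [hfN, hf0, ← hP] at this
      linarith [this]
    rw [sum_delta] at hsum
    have hcnt : P.count true + P.count false = m + n := by
      rw [count_tf, hlenP]
    have hc1 : (P.count true : ℤ) * ((m : ℤ) + n) = (n : ℤ) * (m + n) := by
      have hcf : (P.count false : ℤ) = (m : ℤ) + n - P.count true := by
        have h2 : (P.count true : ℤ) + P.count false = (m : ℤ) + n := by exact_mod_cast hcnt
        linarith
      rw [hcf] at hsum
      ring_nf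
      ring_nf at hsum
      linarith [hsum]
    have hmn : ((m : ℤ) + n) ≠ 0 := by positivity
    have := mul_right_cancel₀ hmn hc1
    exact_mod_cast this
  exact ⟨⟨P, ⟨hlenP, hctP⟩, hset⟩, hxor⟩

lemma al_of_isRankSet (m n : ℕ) (hm : 0 < m) (R : Finset ℤ)
    (h : IsRankSet m n R) : ∀ ℓ ∈ R, ℓ - (m : ℤ) ∈ R ∨ ℓ + (n : ℤ) ∈ R := by
  obtain ⟨P, ⟨hlen, hct⟩, hset⟩ := h
  intro ℓ hl
  rw [← hset] at hl ⊢
  simp only [rankSet, List.mem_toFinset] at hl ⊢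
  have hcf : P.count false = m := by have := count_tf P; omega
  have hPne : P ≠ [] := by
    intro h; rw [h] at hlen; simp at hlen; omega
  rcases mem_pred (m : ℤ) (n : ℤ) P 0 ℓ hl with h1 | h1 | h1
  · -- ℓ = 0, use the wrap-around
    subst h1
    have hsum : (P.map (delta (m:ℤ) (n:ℤ))).sum = 0 := by
      rw [sum_delta, hct, hcf]; ring
    have := last_pred (m:ℤ) (n:ℤ) P 0 hPne
    rw [hsum] at this
    simpa using this
  · exact Or.inl h1
  · exact Or.inr h1

end RankAux

/-- For a coprime pair `(m,n)` of positive integers and a set `R` of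
`m + n` integers with `0 ∈ R`, `R` is the rank set of some `(m,n)`-path if and only if
for every `ℓ ∈ R` exactly one of `ℓ - m` and `ℓ + n` belongs to `R`; and this in turn
is equivalent to: for every `ℓ ∈ R`, at least one of `ℓ - m` and `ℓ + n` belongs to `R`. -/
theorem rank_set_iff_closed_down (m n : ℕ) (hm : 0 < m) (hn : 0 < n)
    (hcop : Nat.Coprime m n) (R : Finset ℤ) (hcard : R.card = m + n)
    (h0 : (0 : ℤ) ∈ R) :
    (IsRankSet m n R ↔ ∀ ℓ ∈ R, Xor' (ℓ - (m : ℤ) ∈ R) (ℓ + (n : ℤ) ∈ R)) ∧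
    ((∀ ℓ ∈ R, Xor' (ℓ - (m : ℤ) ∈ R) (ℓ + (n : ℤ) ∈ R)) ↔
      ∀ ℓ ∈ R, ℓ - (m : ℤ) ∈ R ∨ ℓ + (n : ℤ) ∈ R) := by
  have hmain := RankAux.main_of_al m n hm hn hcop R hcard h0
  have hfwd := RankAux.al_of_isRankSet m n hm R
  have hxor_to_al : (∀ ℓ ∈ R, Xor' (ℓ - (m : ℤ) ∈ R) (ℓ + (n : ℤ) ∈ R)) →
      ∀ ℓ ∈ R, ℓ - (m : ℤ) ∈ R ∨ ℓ + (n : ℤ) ∈ R :=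
    fun h ℓ hl => (h ℓ hl).imp And.left And.left
  refine ⟨⟨fun h => (hmain (hfwd h)).2, fun h => (hmain (hxor_to_al h)).1⟩,
    ⟨hxor_to_al, fun h => (hmain h).2⟩⟩
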